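/- Let G be a group with identity e and H ≤ G a subgroup. For n ≥ 0 consider: (L) the quotient G^{n+1}/H^{n+1} of G^{n+1} by the right H^{n+1}-action (g₀,…,g_n)·(h₀,…,h_n) = (h₀⁻¹g₀h₁, h₁⁻¹g₁h₂, …, h_n⁻¹g_nh₀); and (R) the quotient G∖(ad(G) × (G/H)^{n+1}) of ad(G) × (G/H)^{n+1} by the left G-action g·(g̃, g₀H, …, g_nH) = (g g̃ g⁻¹, g g₀H, …, g g_nH). Then the maps Φ: [g₀, g₁, …, g_n] ↦ [g₀g₁⋯g_n; g₀H, g₀g₁H, …, g₀g₁⋯g_nH] and Ψ: [g̃; g₀H, g₁H, …, g_nH] ↦ [g_n⁻¹ g̃ g₀, g₀⁻¹g₁, g₁⁻¹g₂, …, g_{n-1}⁻¹g_n] are well defined (independent of representatives), mutually inverse bijections between (L) and (R), and they intertwine: the cofaces δ_i[g₀,…,g_n] = [g₀,…,g_{i-1}, e, g_i,…,g_n], codegeneracies σ_i[g₀,…,g_n] = [g₀,…,g_ig_{i+1},…,g_n], and cocyclic operator τ_n[g₀,g₁,…,g_n] = [g₁,…,g_n,g₀] on (L), with the cofaces δ_i[g̃,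 g₀H,…,g_nH] = [g̃, g₀H,…,g_iH, g_iH,…,g_nH], codegeneracies σ_i[g̃, g₀H,…,g_nH] = [g̃, g₀H,…,g_{i-1}H, g_{i+1}H,…,g_nH], and cocyclic operator τ_n[g̃, g₀H,…,g_nH] = [g̃, g₁H,…,g_nH, g̃g₀H] on (R). -/

import Mathlib

/-!
STATEMENT 16: For a group `G`, a subgroup `H` and `n ≥ 0`, the maps
`Φ[g₀,…,g_n] = [g₀⋯g_n; g₀H, g₀g₁H, …, g₀⋯g_nH]` and
`Ψ[g̃; g₀H,…,g_nH] = [g_n⁻¹g̃g₀, g₀⁻¹g₁, …, g_{n-1}⁻¹g_n]`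
are well defined, mutually inverse bijections between
(L) `G^{n+1}/H^{n+1}` (right action `(g₀,…,g_n)·(h₀,…,h_n) = (h₀⁻¹g₀h₁,…,h_n⁻¹g_nh₀)`) and
(R) `G∖(ad(G) × (G/H)^{n+1})` (action `g·(g̃,x) = (gg̃g⁻¹, gx)`), and they intertwine the
cocyclic structures (cofaces inserting `e` resp. duplicating a coset, codegeneracies
multiplying adjacent entries resp. deleting a coset, and the cyclic rotations).
-/

variable {G : Type*} [Group G] (H : Subgroup G)

/-- The orbit equivalence of the right `H^{n+1}`-action on `G^{n+1}`. -/
def lrel (n : ℕ) : Setoid (Fin (n + 1) → G) where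
  r a b := ∃ h : Fin (n + 1) → G, (∀ i, h i ∈ H) ∧ ∀ i, b i = (h i)⁻¹ * a i * h (i + 1)
  iseqv := by
    constructor
    · exact fun a => ⟨fun _ => 1, fun _ => H.one_mem, by simp⟩
    · rintro a b ⟨h, hm, he⟩
      exact ⟨fun i => (h i)⁻¹, fun i => H.inv_mem (hm i), fun i => by rw [he i]; group⟩
    · rintro a b c ⟨h, hm, he⟩ ⟨h', hm', he'⟩
      exact ⟨fun i => h i * h' i, fun i => H.mul_mem (hm i) (hm' i),
        fun i => by rw [he' i, he i]; group⟩

/-- The orbit equivalence of the `G`-action `g·(g̃, x) = (g g̃ g⁻¹, g • x)` on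
`ad(G) × (G/H)^{n+1}`. -/
def rrel (n : ℕ) : Setoid (G × (Fin (n + 1) → G ⧸ H)) where
  r a b := ∃ g : G, b = (g * a.1 * g⁻¹, fun i => g • a.2 i)
  iseqv := by
    constructor
    · exact fun a => ⟨1, by simp⟩
    · rintro ⟨a₁, a₂⟩ b ⟨g, rfl⟩
      refine ⟨g⁻¹, Prod.ext (by group) ?_⟩
      funext i; simp [smul_smul]
    · rintro ⟨a₁, a₂⟩ b c ⟨g, rfl⟩ ⟨g', rfl⟩
      refine ⟨g' * g, Prod.ext (by group) ?_⟩
      funext i; simp [smul_smul]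

/-- (L):  `G^{n+1}/H^{n+1}`. -/
def QL (n : ℕ) := Quotient (lrel H n)

/-- (R):  `G∖(ad(G) × (G/H)^{n+1})`. -/
def QR (n : ℕ) := Quotient (rrel H n)

/-- partial products `g₀g₁⋯g_i`. -/
def pprod {n : ℕ} (g : Fin (n + 1) → G) (i : Fin (n + 1)) : G :=
  ((List.ofFn g).take ((i : ℕ) + 1)).prod

/-- representative-level `Ψ`: `(g̃, (g₀,…,g_n)) ↦ (g_n⁻¹g̃g₀, g₀⁻¹g₁, …, g_{n-1}⁻¹g_n)`. -/
def psiRep {n : ℕ} (gt : G) (x : Fin (n + 1) → G) : Fin (n + 1) → G :=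
  fun i => if i = 0 then (x (Fin.last n))⁻¹ * gt * x 0 else (x (i - 1))⁻¹ * x i

/-- merging adjacent entries `(g₀,…,g_ig_{i+1},…,g_{n+1})`. -/
def mergeAt {n : ℕ} (i : Fin (n + 1)) (g : Fin (n + 2) → G) : Fin (n + 1) → G :=
  fun j => if (j : ℕ) < (i : ℕ) then g j.castSucc
    else if j = i then g i.castSucc * g i.succ else g j.succ

namespace Takeuchi

lemma fin_zero_sub_one {n : ℕ} : (0 : Fin (n+1)) - 1 = Fin.last n := by
  apply Fin.ext; simp [Fin.sub_def, Fin.last]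

lemma fin_mk_add_one {n k : ℕ} (h : k+1 < n+1) :
    (⟨k, by omega⟩ : Fin (n+1)) + 1 = ⟨k+1, h⟩ := by
  apply Fin.ext; simp [Fin.add_def]; omega

lemma fin_coe_sub_one {n : ℕ} {i : Fin (n+1)} (h : i ≠ 0) :
    ((i - 1 : Fin (n+1)) : ℕ) = (i : ℕ) - 1 := by
  rw [Fin.coe_sub_one, if_neg h]

lemma fin_sub_one_mk {n k : ℕ} (h : k+1 < n+1) :
    (⟨k+1, h⟩ : Fin (n+1)) - 1 = ⟨k, by omega⟩ := by
  apply Fin.ext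
  rw [fin_coe_sub_one (by simp [Fin.ext_iff])]; rfl

variable {G : Type*} [Group G] {H : Subgroup G}

lemma pprod_zero {n} (g : Fin (n+1) → G) : pprod g 0 = g 0 := by
  simp [pprod, List.ofFn_succ]

lemma pprod_mk_succ {n} (g : Fin (n+1) → G) (k : ℕ) (h : k+1 < n+1) :
    pprod g ⟨k+1, h⟩ = pprod g ⟨k, by omega⟩ * g ⟨k+1, h⟩ := by
  have := List.prod_take_succ (List.ofFn g) (k+1) (by simpa using h)
  simpa [pprod] using this

lemma pprod_last {n} (g : Fin (n+1) → G) : pprod g (Fin.last n) = (List.ofFn g).prod := by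
  simp only [pprod, Fin.val_last]
  rw [List.take_of_length_le (by simp)]

lemma pprod_succ {n} (g : Fin (n+1) → G) (i : Fin (n+1)) (h : i ≠ 0) :
    pprod g i = pprod g (i - 1) * g i := by
  obtain ⟨k, hk⟩ := i
  have hk0 : k ≠ 0 := by simpa [Fin.ext_iff] using h
  obtain ⟨k, rfl⟩ := Nat.exists_eq_succ_of_ne_zero hk0
  rw [pprod_mk_succ g k hk, fin_sub_one_mk hk]

lemma pprod_rel {n} (a h : Fin (n+1) → G) :
    ∀ i, pprod (fun j => (h j)⁻¹ * a j * h (j+1)) i = (h 0)⁻¹ * pprod a i * h (i + 1) := by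
  set b := fun j => (h j)⁻¹ * a j * h (j+1) with hb
  have key : ∀ k (hk : k < n+1),
      pprod b ⟨k, hk⟩ = (h 0)⁻¹ * pprod a ⟨k, hk⟩ * h (⟨k, hk⟩ + 1) := by
    intro k
    induction k with
    | zero =>
      intro hk
      have h0 : (⟨0, hk⟩ : Fin (n+1)) = 0 := rfl
      rw [h0, pprod_zero, pprod_zero, hb]
    | succ k ih =>
      intro hk
      rw [pprod_mk_succ b k hk, pprod_mk_succ a k hk, ih (by omega), fin_mk_add_one hk]
      show _ * ((h _)⁻¹ * a _ * h _) = _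
      group
  intro i
  have := key i.val i.isLt
  simpa using this

end Takeuchi
namespace Takeuchi
variable {G : Type*} [Group G] {H : Subgroup G}

lemma mk_out (q : G ⧸ H) : QuotientGroup.mk q.out = q := q.out_eq

lemma mk_mul_mem {x h : G} (hh : h ∈ H) :
    (QuotientGroup.mk (x * h) : G ⧸ H) = QuotientGroup.mk x := by
  symm; rw [QuotientGroup.eq]; simpa using hh

lemma psiRep_zero {n} (gt : G) (z : Fin (n+1) → G) :
    psiRep gt z 0 = (z (Fin.last n))⁻¹ * gt * z 0 := if_pos rfl

lemma psiRep_ne_zero {n} (gt : G) (z : Fin (n+1) → G) {i : Fin (n+1)} (h : i ≠ 0) :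
    psiRep gt z i = (z (i - 1))⁻¹ * z i := if_neg h

/-- representative level `Φ`. -/
def phiRep {n : ℕ} (g : Fin (n+1) → G) : G × (Fin (n+1) → G ⧸ H) :=
  ((List.ofFn g).prod, fun i => QuotientGroup.mk (pprod g i))

lemma phi_sound {n} (a b : Fin (n+1) → G) (hab : (lrel H n).r a b) :
    (rrel H n).r (phiRep (H := H) a) (phiRep (H := H) b) := by
  obtain ⟨h, hm, he⟩ := hab
  have hb : b = fun j => (h j)⁻¹ * a j * h (j+1) := funext he
  subst hb
  refine ⟨(h 0)⁻¹, Prod.ext ?_ ?_⟩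
  · simp only [phiRep]
    rw [← pprod_last, ← pprod_last, pprod_rel, Fin.last_add_one, inv_inv]
  · simp only [phiRep]
    funext i
    rw [pprod_rel a h i]
    show QuotientGroup.mk _ = (h 0)⁻¹ • QuotientGroup.mk _
    rw [show (h 0)⁻¹ * pprod a i * h (i+1) = ((h 0)⁻¹ * pprod a i) * h (i+1) by group]
    rw [mk_mul_mem (hm (i+1))]
    rfl

/-- `Φ` on the quotient. -/
def Phi (H : Subgroup G) (n : ℕ) : QL H n → QR H n :=
  Quotient.lift (fun a => Quotient.mk (rrel H n) (phiRep a))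
    (fun a b hab => Quotient.sound (phi_sound a b hab))

lemma Phi_mk {n} (g : Fin (n+1) → G) :
    Phi H n (Quotient.mk (lrel H n) g) = Quotient.mk (rrel H n) (phiRep g) := rfl

lemma psi_congr {n} (gt : G) (x y : Fin (n+1) → G)
    (hxy : ∀ i, (QuotientGroup.mk (x i) : G ⧸ H) = QuotientGroup.mk (y i)) :
    (lrel H n).r (psiRep gt x) (psiRep gt y) := by
  set k : Fin (n+1) → G := fun i => (x i)⁻¹ * y i with hkdef
  have hk : ∀ i, k i ∈ H := fun i => by
    rw [hkdef]; rw [← QuotientGroup.eq]; exact hxy i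
  have hy : ∀ i, y i = x i * k i := fun i => by rw [hkdef]; group
  refine ⟨fun i => k (i - 1), fun i => hk _, fun i => ?_⟩
  beta_reduce
  by_cases h : i = 0
  · subst h
    rw [psiRep_zero, psiRep_zero, add_sub_cancel_right, fin_zero_sub_one,
      hy (Fin.last n), hy 0]
    group
  · rw [psiRep_ne_zero _ _ h, psiRep_ne_zero _ _ h, add_sub_cancel_right,
      hy (i - 1), hy i]
    group

lemma psi_g {n} (gt g : G) (x : Fin (n+1) → G) :
    psiRep (g * gt * g⁻¹) (fun i => g * x i) = psiRep gt x := by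
  funext i
  by_cases h : i = 0
  · subst h; rw [psiRep_zero, psiRep_zero]; group
  · rw [psiRep_ne_zero _ _ h, psiRep_ne_zero _ _ h]; group

lemma psi_sound {n} (a b : G × (Fin (n+1) → G ⧸ H)) (hab : (rrel H n).r a b) :
    (lrel H n).r (psiRep a.1 (fun i => (a.2 i).out)) (psiRep b.1 (fun i => (b.2 i).out)) := by
  obtain ⟨a1, a2⟩ := a
  obtain ⟨g, rfl⟩ := hab
  refine (lrel H n).trans (b := psiRep (g * a1 * g⁻¹) (fun i => g * (a2 i).out)) ?_ ?_
  · rw [psi_g]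
  · refine psi_congr _ _ _ (fun i => ?_)
    show QuotientGroup.mk (g * (a2 i).out) = QuotientGroup.mk ((g • a2 i).out)
    rw [mk_out]
    show (g • QuotientGroup.mk (a2 i).out : G ⧸ H) = g • a2 i
    rw [mk_out]

/-- `Ψ` on the quotient. -/
noncomputable def Psi (H : Subgroup G) (n : ℕ) : QR H n → QL H n :=
  Quotient.lift (fun p => Quotient.mk (lrel H n) (psiRep p.1 (fun i => (p.2 i).out)))
    (fun a b hab => Quotient.sound (psi_sound a b hab))

lemma Psi_mk' {n} (gt : G) (x : Fin (n+1) → G ⧸ H) :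
    Psi H n (Quotient.mk (rrel H n) (gt, x)) =
      Quotient.mk (lrel H n) (psiRep gt (fun i => (x i).out)) := rfl

lemma Psi_mk {n} (gt : G) (x : Fin (n+1) → G) :
    Psi H n (Quotient.mk (rrel H n) (gt, fun i => (QuotientGroup.mk (x i) : G ⧸ H))) =
      Quotient.mk (lrel H n) (psiRep gt x) := by
  rw [Psi_mk']
  exact Quotient.sound (psi_congr _ _ _ (fun i => by rw [mk_out]))

end Takeuchi
namespace Takeuchi
variable {G : Type*} [Group G] {H : Subgroup G}

lemma psiRep_phiRep {n} (g : Fin (n+1) → G) :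
    psiRep (List.ofFn g).prod (pprod g) = g := by
  funext i
  by_cases h : i = 0
  · subst h
    rw [psiRep_zero, pprod_last, pprod_zero]
    group
  · rw [psiRep_ne_zero _ _ h, pprod_succ g i h]
    group

lemma psi_phi (n : ℕ) : Function.LeftInverse (Psi H n) (Phi H n) := by
  intro c
  induction c using Quotient.ind with
  | _ g =>
    rw [Phi_mk]
    simp only [phiRep]
    rw [Psi_mk, psiRep_phiRep]

lemma pprod_psiRep {n} (gt : G) (y : Fin (n+1) → G) (i : Fin (n+1)) :
    pprod (psiRep gt y) i = (y (Fin.last n))⁻¹ * gt * y i := by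
  obtain ⟨k, hk⟩ := i
  induction k with
  | zero =>
    have h0 : (⟨0, hk⟩ : Fin (n+1)) = 0 := rfl
    rw [h0, pprod_zero, psiRep_zero]
  | succ k ih =>
    rw [pprod_mk_succ _ k hk, ih (by omega),
      psiRep_ne_zero _ _ (i := ⟨k+1, hk⟩) (by simp [Fin.ext_iff]),
      fin_sub_one_mk hk]
    group

lemma phi_psi (n : ℕ) : Function.RightInverse (Psi H n) (Phi H n) := by
  intro c
  induction c using Quotient.ind with
  | _ p =>
    obtain ⟨gt, x⟩ := p
    rw [Psi_mk', Phi_mk]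
    set y : Fin (n+1) → G := fun i => (x i).out with hy
    refine Quotient.sound ((rrel H n).symm ⟨(y (Fin.last n))⁻¹ * gt, Prod.ext ?_ ?_⟩)
    · show (List.ofFn (psiRep gt y)).prod = _
      rw [← pprod_last, pprod_psiRep]
      group
    · funext i
      show QuotientGroup.mk (pprod (psiRep gt y) i) = _
      rw [pprod_psiRep]
      show _ = ((y (Fin.last n))⁻¹ * gt) • x i
      conv_rhs => rw [← mk_out (x i)]
      rfl

end Takeuchi
namespace Takeuchi
variable {G : Type*} [Group G] {H : Subgroup G}

/-- R-side coface. -/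
def DR (H : Subgroup G) (m : ℕ) (i : Fin (m+1)) : QR H m → QR H (m+1) :=
  Quotient.lift (fun p => Quotient.mk (rrel H (m+1)) (p.1, p.2 ∘ Fin.predAbove i))
    (by
      rintro ⟨a1, a2⟩ b ⟨g, rfl⟩
      exact Quotient.sound ⟨g, rfl⟩)

/-- extra R-side coface `δ₀`. -/
def DR0 (H : Subgroup G) (m : ℕ) : QR H m → QR H (m+1) :=
  Quotient.lift
    (fun p => Quotient.mk (rrel H (m+1)) (p.1, Fin.cons (p.1⁻¹ • p.2 (Fin.last m)) p.2))
    (by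
      rintro ⟨a1, a2⟩ b ⟨g, rfl⟩
      refine Quotient.sound ⟨g, Prod.ext rfl (funext fun j => ?_)⟩
      refine Fin.cases ?_ (fun k => ?_) j
      · show (g * a1 * g⁻¹)⁻¹ • g • a2 (Fin.last m) = g • a1⁻¹ • a2 (Fin.last m)
        rw [smul_smul, smul_smul]
        congr 1
        group
      · simp)

/-- R-side codegeneracy. -/
def SR (H : Subgroup G) (m : ℕ) (i : Fin (m+1)) : QR H (m+1) → QR H m :=
  Quotient.lift (fun p => Quotient.mk (rrel H m) (p.1, p.2 ∘ Fin.succAbove i.castSucc))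
    (by
      rintro ⟨a1, a2⟩ b ⟨g, rfl⟩
      exact Quotient.sound ⟨g, rfl⟩)

/-- R-side cyclic operator. -/
def TR (H : Subgroup G) (m : ℕ) : QR H m → QR H m :=
  Quotient.lift
    (fun p => Quotient.mk (rrel H m)
      (p.1, fun i => if (i : ℕ) = m then p.1 • p.2 0 else p.2 (i+1)))
    (by
      rintro ⟨a1, a2⟩ b ⟨g, rfl⟩
      refine Quotient.sound ⟨g, Prod.ext rfl (funext fun j => ?_)⟩
      show (if (j : ℕ) = m then (g * a1 * g⁻¹) • g • a2 0 else g • a2 (j+1))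
        = g • (if (j : ℕ) = m then a1 • a2 0 else a2 (j+1))
      split
      · rw [smul_smul, smul_smul]
        congr 1
        group
      · rfl)

lemma DR_mk {m} (i : Fin (m+1)) (gt : G) (x : Fin (m+1) → G ⧸ H) :
    DR H m i (Quotient.mk (rrel H m) (gt, x)) =
      Quotient.mk (rrel H (m+1)) (gt, x ∘ Fin.predAbove i) := rfl

lemma DR0_mk {m} (gt : G) (x : Fin (m+1) → G ⧸ H) :
    DR0 H m (Quotient.mk (rrel H m) (gt, x)) =
      Quotient.mk (rrel H (m+1)) (gt, Fin.cons (gt⁻¹ • x (Fin.last m)) x) := rfl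

lemma SR_mk {m} (i : Fin (m+1)) (gt : G) (x : Fin (m+2) → G ⧸ H) :
    SR H m i (Quotient.mk (rrel H (m+1)) (gt, x)) =
      Quotient.mk (rrel H m) (gt, x ∘ Fin.succAbove i.castSucc) := rfl

lemma TR_mk {m} (gt : G) (x : Fin (m+1) → G ⧸ H) :
    TR H m (Quotient.mk (rrel H m) (gt, x)) =
      Quotient.mk (rrel H m) (gt, fun i => if (i : ℕ) = m then gt • x 0 else x (i+1)) := rfl

end Takeuchi
namespace Takeuchi
variable {G : Type*} [Group G] {H : Subgroup G}

lemma fin_add_one_ne_zero {m} {i : Fin (m+1)} (h : (i:ℕ) < m) : i + 1 ≠ 0 := by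
  intro hc
  have := congrArg Fin.val hc
  rw [Fin.val_add_one] at this
  rcases eq_or_ne i (Fin.last m) with he | he
  · subst he; simp [Fin.last] at h
  · rw [if_neg he, Fin.val_zero] at this; omega

lemma fin_eq_last_iff {m} {i : Fin (m+1)} : (i:ℕ) = m ↔ i = Fin.last m := by
  rw [Fin.ext_iff]; rfl

/-- the rotation computation. -/
lemma psiRep_rot {m} (g : Fin (m+1) → G) :
    psiRep (List.ofFn g).prod
      (fun i => if (i:ℕ) = m then (List.ofFn g).prod * pprod g 0 else pprod g (i+1))
      = fun i => g (i+1) := by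
  set P := (List.ofFn g).prod with hP
  set y : Fin (m+1) → G :=
    fun i => if (i:ℕ) = m then P * pprod g 0 else pprod g (i+1) with hy
  have hyl : y (Fin.last m) = P * pprod g 0 := by rw [hy]; simp
  have hyo : ∀ j : Fin (m+1), (j:ℕ) ≠ m → y j = pprod g (j+1) := fun j hj => by
    rw [hy]; exact if_neg hj
  funext i
  by_cases h : i = 0
  · subst h
    rw [psiRep_zero, hyl]
    by_cases hm : m = 0
    · subst hm
      have h0 : y 0 = P * pprod g 0 := hyl
      have hP0 : P = g 0 := by rw [hP, ← pprod_last]; exact pprod_zero g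
      have he : (0 : Fin 1) + 1 = 0 := rfl
      rw [h0, pprod_zero, he, hP0]
      group
    · have h0 : y 0 = pprod g (0+1) := hyo 0 (by simpa using Ne.symm hm)
      rw [h0, pprod_succ g (0+1) (fin_add_one_ne_zero (by simpa using Nat.pos_of_ne_zero hm)),
        add_sub_cancel_right, pprod_zero]
      group
  · rw [psiRep_ne_zero _ _ h]
    have hne : ((i - 1 : Fin (m+1)) : ℕ) ≠ m := by
      rw [fin_coe_sub_one h]
      have h1 : (i:ℕ) ≠ 0 := fun hc => h (Fin.ext hc)
      have h2 : (i:ℕ) < m + 1 := i.isLt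
      omega
    have h2 : y (i-1) = pprod g ((i-1)+1) := hyo _ hne
    by_cases hi : (i:ℕ) = m
    · have hil : i = Fin.last m := fin_eq_last_iff.mp hi
      have h1 : y i = P * pprod g 0 := by rw [hil]; exact hyl
      rw [h1, h2, sub_add_cancel, hil, pprod_last, ← hP, Fin.last_add_one, pprod_zero]
      group
    · have h1 : y i = pprod g (i+1) := hyo i hi
      have hlt : (i:ℕ) < m := by have := i.isLt; omega
      rw [h1, h2, sub_add_cancel,
        pprod_succ g (i+1) (fin_add_one_ne_zero hlt), add_sub_cancel_right]
      group

/-- L-side cyclic operator. -/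
noncomputable def TL (H : Subgroup G) (m : ℕ) : QL H m → QL H m :=
  fun c => Psi H m (TR H m (Phi H m c))

lemma TL_mk {m} (g : Fin (m+1) → G) :
    TL H m (Quotient.mk (lrel H m) g) = Quotient.mk (lrel H m) (fun i => g (i+1)) := by
  unfold TL
  rw [Phi_mk]
  show Psi H m (TR H m (Quotient.mk _
    ((List.ofFn g).prod, fun i => QuotientGroup.mk (pprod g i)))) = _
  rw [TR_mk]
  have hx : (fun i : Fin (m+1) => if (i:ℕ) = m then
        ((List.ofFn g).prod) • (QuotientGroup.mk (pprod g 0) : G ⧸ H)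
        else QuotientGroup.mk (pprod g (i+1)))
      = fun i : Fin (m+1) => (QuotientGroup.mk
        (if (i:ℕ) = m then (List.ofFn g).prod * pprod g 0 else pprod g (i+1)) : G ⧸ H) := by
    funext i
    split <;> rfl
  rw [hx, Psi_mk, psiRep_rot]

end Takeuchi
namespace Takeuchi
variable {G : Type*} [Group G] {H : Subgroup G}

lemma pprod_gap1 {n} (g : Fin (n+1) → G) {u v : Fin (n+1)} (h : (v:ℕ) = (u:ℕ)+1) :
    (pprod g u)⁻¹ * pprod g v = g v := by
  have hv0 : v ≠ 0 := by rw [Ne, Fin.ext_iff, Fin.val_zero]; omega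
  rw [pprod_succ g v hv0,
    show v - 1 = u from Fin.ext (by rw [fin_coe_sub_one hv0]; omega)]
  group

lemma pprod_gap2 {n} (g : Fin (n+1) → G) {u v : Fin (n+1)} (h : (v:ℕ) = (u:ℕ)+2) :
    (pprod g u)⁻¹ * pprod g v = g (v-1) * g v := by
  have hv0 : v ≠ 0 := by rw [Ne, Fin.ext_iff, Fin.val_zero]; omega
  have hv10 : v - 1 ≠ 0 := by simp [Fin.ext_iff, fin_coe_sub_one hv0]; omega
  rw [pprod_succ g v hv0, pprod_succ g (v-1) hv10,
    show v - 1 - 1 = u from Fin.ext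
      (by rw [fin_coe_sub_one hv10, fin_coe_sub_one hv0]; omega)]
  group

lemma coe_succAbove {m} (c : Fin (m+2)) (j : Fin (m+1)) :
    ((c.succAbove j : Fin (m+2)) : ℕ) = if (j:ℕ) < (c:ℕ) then (j:ℕ) else (j:ℕ)+1 := by
  rw [Fin.succAbove]
  by_cases h : (j.castSucc : Fin (m+2)) < c
  · rw [if_pos h, if_pos (by simpa [Fin.lt_def] using h)]
    simp
  · rw [if_neg h, if_neg (by simpa [Fin.lt_def] using h)]
    simp

lemma psiRep_merge {m} (i : Fin (m+1)) (g : Fin (m+2) → G) :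
    psiRep (List.ofFn g).prod (fun j => pprod g (Fin.succAbove i.castSucc j))
      = mergeAt i g := by
  set P := (List.ofFn g).prod with hP
  have hcoe : ∀ j : Fin (m+1), ((Fin.succAbove i.castSucc j : Fin (m+2)) : ℕ)
      = if (j:ℕ) < (i:ℕ) then (j:ℕ) else (j:ℕ)+1 := fun j => by
    rw [coe_succAbove]; simp
  funext j
  simp only [mergeAt]
  by_cases hj : j = 0
  · subst hj
    rw [psiRep_zero]
    beta_reduce
    rw [show Fin.succAbove i.castSucc (Fin.last m) = Fin.last (m+1) from
      Fin.ext (by rw [hcoe]; have := i.isLt; simp [Fin.last]; omega)]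
    rw [pprod_last, ← hP]
    by_cases h0 : ((0 : Fin (m+1)):ℕ) < (i:ℕ)
    · rw [show Fin.succAbove i.castSucc 0 = 0 from
        Fin.ext (by rw [hcoe, if_pos h0]; simp)]
      rw [pprod_zero, if_pos h0,
        show ((0:Fin (m+1)).castSucc) = (0 : Fin (m+2)) from rfl]
      group
    · have hi0 : i = 0 := Fin.ext (by simp at h0 ⊢; omega)
      rw [if_neg h0, if_pos (by rw [hi0])]
      rw [show Fin.succAbove i.castSucc 0 = ⟨1, by omega⟩ from
        Fin.ext (by rw [hcoe]; simp [hi0])]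
      rw [pprod_mk_succ g 0 (by omega),
        show (⟨0, by omega⟩ : Fin (m+2)) = 0 from rfl, pprod_zero,
        show (⟨1, by omega⟩ : Fin (m+2)) = i.succ from
          Fin.ext (by simp [hi0]),
        show (0 : Fin (m+2)) = i.castSucc from Fin.ext (by simp [hi0])]
      group
  · rw [psiRep_ne_zero _ _ hj]
    beta_reduce
    have hj0 : (j:ℕ) ≠ 0 := fun hc => hj (Fin.ext hc)
    have hcj : ((j - 1 : Fin (m+1)):ℕ) = (j:ℕ) - 1 := fin_coe_sub_one hj
    rcases lt_trichotomy ((j:ℕ)) ((i:ℕ)) with hlt | heq | hgt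
    · rw [pprod_gap1 g (by rw [hcoe, hcoe, if_pos hlt, if_pos (by omega)]; omega)]
      rw [if_pos hlt]
      exact congrArg g (Fin.ext (by rw [hcoe, if_pos hlt]; simp))
    · rw [pprod_gap2 g (by rw [hcoe, hcoe, if_neg (by omega), if_pos (by omega)]; omega)]
      rw [if_neg (by omega), if_pos (Fin.ext heq)]
      have hv : ((Fin.succAbove i.castSucc j : Fin (m+2)) : ℕ) = (j:ℕ)+1 := by
        rw [hcoe, if_neg (by omega)]
      congr 1
      · exact congrArg g (Fin.ext (by rw [fin_coe_sub_one (i := Fin.succAbove i.castSucc j) (by rw [Ne, Fin.ext_iff, hv, Fin.val_zero]; omega), hv]; simp; omega))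
      · exact congrArg g (Fin.ext (by rw [hv]; simp; omega))
    · rw [pprod_gap1 g (by rw [hcoe, hcoe, if_neg (by omega), if_neg (by omega)]; omega)]
      rw [if_neg (by omega), if_neg (by simp [Fin.ext_iff]; omega)]
      exact congrArg g (Fin.ext (by rw [hcoe, if_neg (by omega)]; simp))

/-- L-side codegeneracy. -/
noncomputable def SL (H : Subgroup G) (m : ℕ) (i : Fin (m+1)) : QL H (m+1) → QL H m :=
  fun c => Psi H m (SR H m i (Phi H (m+1) c))

lemma SL_mk {m} (i : Fin (m+1)) (g : Fin (m+2) → G) :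
    SL H m i (Quotient.mk (lrel H (m+1)) g) = Quotient.mk (lrel H m) (mergeAt i g) := by
  unfold SL
  rw [Phi_mk]
  show Psi H m (SR H m i (Quotient.mk _
    ((List.ofFn g).prod, fun k => QuotientGroup.mk (pprod g k)))) = _
  rw [SR_mk]
  have hx : ((fun k => (QuotientGroup.mk (pprod g k) : G ⧸ H)) ∘ Fin.succAbove i.castSucc)
      = fun k => (QuotientGroup.mk (pprod g (Fin.succAbove i.castSucc k)) : G ⧸ H) := rfl
  rw [hx, Psi_mk, psiRep_merge]

end Takeuchi
namespace Takeuchi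
variable {G : Type*} [Group G] {H : Subgroup G}

lemma coe_predAbove {m} (k : Fin (m+1)) (j : Fin (m+2)) :
    ((Fin.predAbove k j : Fin (m+1)) : ℕ) = if (k:ℕ) < (j:ℕ) then (j:ℕ) - 1 else (j:ℕ) := by
  rw [Fin.predAbove]
  by_cases h : (k.castSucc : Fin (m+2)) < j
  · rw [dif_pos h, if_pos (by simpa [Fin.lt_def] using h)]
    simp
  · rw [dif_neg h, if_neg (by simpa [Fin.lt_def] using h)]
    simp

lemma psiRep_dup {m} (k : Fin (m+1)) (g : Fin (m+1) → G) :
    psiRep (List.ofFn g).prod (fun j => pprod g (Fin.predAbove k j))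
      = Fin.insertNth k.succ 1 g := by
  set P := (List.ofFn g).prod with hP
  funext j
  by_cases hj : j = k.succ
  · subst hj
    rw [Fin.insertNth_apply_same, psiRep_ne_zero _ _ (Fin.succ_ne_zero k)]
    beta_reduce
    rw [show Fin.predAbove k (k.succ - 1) = Fin.predAbove k k.succ from
      Fin.ext (by
        rw [coe_predAbove, coe_predAbove, fin_coe_sub_one (Fin.succ_ne_zero k)]
        simp)]
    group
  · obtain ⟨l, rfl⟩ := Fin.exists_succAbove_eq hj
    rw [Fin.insertNth_apply_succAbove]
    have hval : ((Fin.succAbove k.succ l : Fin (m+2)) : ℕ)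
        = if (l:ℕ) < (k:ℕ)+1 then (l:ℕ) else (l:ℕ)+1 := by
      rw [coe_succAbove]; simp
    by_cases hl : l = 0
    · subst hl
      have hz : Fin.succAbove k.succ 0 = 0 := Fin.ext (by rw [hval]; simp)
      rw [hz, psiRep_zero]
      beta_reduce
      rw [show Fin.predAbove k (Fin.last (m+1)) = Fin.last m from
          Fin.ext (by rw [coe_predAbove, Fin.val_last, if_pos (by simpa using k.isLt)]; simp),
        show Fin.predAbove k 0 = 0 from Fin.ext (by rw [coe_predAbove]; simp),
        pprod_last, ← hP, pprod_zero]
      group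
    · have hl0 : (l:ℕ) ≠ 0 := fun hc => hl (Fin.ext hc)
      have hjne : Fin.succAbove k.succ l ≠ 0 := by
        rw [Ne, Fin.ext_iff, hval, Fin.val_zero]
        split <;> omega
      rw [psiRep_ne_zero _ _ hjne]
      beta_reduce
      have hsub : ((Fin.succAbove k.succ l - 1 : Fin (m+2)) : ℕ)
          = ((Fin.succAbove k.succ l : Fin (m+2)) : ℕ) - 1 := fin_coe_sub_one hjne
      by_cases hlk : (l:ℕ) < (k:ℕ)+1
      · rw [pprod_gap1 g (u := Fin.predAbove k (Fin.succAbove k.succ l - 1))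
          (v := Fin.predAbove k (Fin.succAbove k.succ l))
          (by rw [coe_predAbove, coe_predAbove, hsub, hval, if_pos hlk,
                if_neg (by omega), if_neg (by omega)]; omega)]
        exact congrArg g (Fin.ext (by rw [coe_predAbove, hval, if_pos hlk, if_neg (by omega)]))
      · rw [pprod_gap1 g (u := Fin.predAbove k (Fin.succAbove k.succ l - 1))
          (v := Fin.predAbove k (Fin.succAbove k.succ l))
          (by rw [coe_predAbove, coe_predAbove, hsub, hval, if_neg hlk,
                if_pos (by omega), if_pos (by omega)]; omega)]
        exact congrArg g (Fin.ext (by rw [coe_predAbove, hval, if_neg hlk, if_pos (by omega)]; omega))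

lemma psiRep_dup0 {m} (g : Fin (m+1) → G) :
    psiRep (List.ofFn g).prod
      (Fin.cons ((List.ofFn g).prod⁻¹ * pprod g (Fin.last m)) (pprod g))
      = Fin.insertNth 0 1 g := by
  set P := (List.ofFn g).prod with hP
  rw [show P⁻¹ * pprod g (Fin.last m) = 1 by rw [pprod_last, ← hP]; group]
  funext j
  by_cases hj : j = 0
  · subst hj
    rw [Fin.insertNth_apply_same, psiRep_zero,
      show Fin.last (m+1) = (Fin.last m).succ from (Fin.succ_last m).symm,
      Fin.cons_succ, Fin.cons_zero, pprod_last, ← hP]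
    group
  · obtain ⟨l, rfl⟩ := Fin.exists_succAbove_eq hj
    rw [Fin.insertNth_apply_succAbove,
      show Fin.succAbove 0 l = l.succ from rfl,
      psiRep_ne_zero _ _ (Fin.succ_ne_zero l)]
    rw [Fin.cons_succ,
      show (l.succ - 1 : Fin (m+2)) = l.castSucc from
      Fin.ext (by rw [fin_coe_sub_one (Fin.succ_ne_zero l)]; simp)]
    by_cases hl : l = 0
    · subst hl
      rw [show ((0:Fin (m+1)).castSucc) = (0 : Fin (m+2)) from rfl, Fin.cons_zero,
        pprod_zero]
      group
    · rw [show l.castSucc = (l-1).succ from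
        Fin.ext (by
          simp only [Fin.coe_castSucc, Fin.val_succ, fin_coe_sub_one hl]
          have : (l:ℕ) ≠ 0 := fun hc => hl (Fin.ext hc)
          omega),
        Fin.cons_succ]
      rw [pprod_succ g l hl]
      group

/-- L-side cofaces. -/
noncomputable def DL (H : Subgroup G) (m : ℕ) : Fin (m+2) → QL H m → QL H (m+1) :=
  Fin.cases (fun c => Psi H (m+1) (DR0 H m (Phi H m c)))
    (fun k c => Psi H (m+1) (DR H m k (Phi H m c)))

lemma DL_succ {m} (k : Fin (m+1)) (c : QL H m) :
    DL H m k.succ c = Psi H (m+1) (DR H m k (Phi H m c)) := by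
  unfold DL
  rw [Fin.cases_succ]

lemma DL_zero {m} (c : QL H m) :
    DL H m 0 c = Psi H (m+1) (DR0 H m (Phi H m c)) := by
  unfold DL
  rw [Fin.cases_zero]

lemma DL_mk {m} (i : Fin (m+2)) (g : Fin (m+1) → G) :
    DL H m i (Quotient.mk (lrel H m) g)
      = Quotient.mk (lrel H (m+1)) (Fin.insertNth i 1 g) := by
  refine Fin.cases ?_ (fun k => ?_) i
  · rw [DL_zero (c := Quotient.mk (lrel H m) g), Phi_mk]
    show Psi H (m+1) (DR0 H m (Quotient.mk _
      ((List.ofFn g).prod, fun t => QuotientGroup.mk (pprod g t)))) = _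
    rw [DR0_mk]
    have hx : (Fin.cons (α := fun _ => G ⧸ H) (((List.ofFn g).prod)⁻¹ • (QuotientGroup.mk (pprod g (Fin.last m)) : G ⧸ H))
          (fun t => (QuotientGroup.mk (pprod g t) : G ⧸ H)))
        = fun t : Fin (m+2) => (QuotientGroup.mk
            ((Fin.cons (α := fun _ => G) ((List.ofFn g).prod⁻¹ * pprod g (Fin.last m)) (pprod g) t)) : G ⧸ H) := by
      funext t
      refine Fin.cases ?_ (fun l => ?_) t
      · rw [Fin.cons_zero, Fin.cons_zero]; rfl
      · rw [Fin.cons_succ, Fin.cons_succ]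
    rw [hx, Psi_mk, psiRep_dup0]
  · rw [DL_succ (c := Quotient.mk (lrel H m) g), Phi_mk]
    show Psi H (m+1) (DR H m k (Quotient.mk _
      ((List.ofFn g).prod, fun t => QuotientGroup.mk (pprod g t)))) = _
    rw [DR_mk]
    have hx : ((fun t => (QuotientGroup.mk (pprod g t) : G ⧸ H)) ∘ Fin.predAbove k)
        = fun t : Fin (m+2) => (QuotientGroup.mk (pprod g (Fin.predAbove k t)) : G ⧸ H) := rfl
    rw [hx, Psi_mk, psiRep_dup]

end Takeuchi
theorem takeuchi_galois_cocyclic_quotient_iso :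
    ∃ (Φ : ∀ m, QL H m → QR H m) (Ψ : ∀ m, QR H m → QL H m),
      -- Φ is well defined with the stated formula
      (∀ m (g : Fin (m + 1) → G),
        Φ m (Quotient.mk (lrel H m) g) =
          Quotient.mk (rrel H m)
            ((List.ofFn g).prod, fun i => (QuotientGroup.mk (pprod g i) : G ⧸ H))) ∧
      -- Ψ is well defined with the stated formula (on arbitrary coset representatives)
      (∀ m (gt : G) (x : Fin (m + 1) → G),
        Ψ m (Quotient.mk (rrel H m) (gt, fun i => (QuotientGroup.mk (x i) : G ⧸ H))) =
          Quotient.mk (lrel H m) (psiRep gt x)) ∧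
      -- mutually inverse bijections
      (∀ m, Function.LeftInverse (Ψ m) (Φ m) ∧ Function.RightInverse (Ψ m) (Φ m)) ∧
      -- the cocyclic structure maps descend to the quotients and are intertwined
      ∃ (δL : ∀ m, Fin (m + 2) → QL H m → QL H (m + 1))
        (σL : ∀ m, Fin (m + 1) → QL H (m + 1) → QL H m)
        (τL : ∀ m, QL H m → QL H m)
        (δR : ∀ m, Fin (m + 1) → QR H m → QR H (m + 1))
        (σR : ∀ m, Fin (m + 1) → QR H (m + 1) → QR H m)
        (τR : ∀ m, QR H m → QR H m),
        -- cofaces on (L): insert the identity `e` at slot `i`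
        (∀ m (i : Fin (m + 2)) (g : Fin (m + 1) → G),
          δL m i (Quotient.mk (lrel H m) g) =
            Quotient.mk (lrel H (m + 1)) (Fin.insertNth i 1 g)) ∧
        -- codegeneracies on (L): merge adjacent entries
        (∀ m (i : Fin (m + 1)) (g : Fin (m + 2) → G),
          σL m i (Quotient.mk (lrel H (m + 1)) g) =
            Quotient.mk (lrel H m) (mergeAt i g)) ∧
        -- cyclic rotation on (L)
        (∀ m (g : Fin (m + 1) → G),
          τL m (Quotient.mk (lrel H m) g) =
            Quotient.mk (lrel H m) (fun i => g (i + 1))) ∧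
        -- cofaces on (R): duplicate the coset at slot `i`
        (∀ m (i : Fin (m + 1)) (gt : G) (x : Fin (m + 1) → G ⧸ H),
          δR m i (Quotient.mk (rrel H m) (gt, x)) =
            Quotient.mk (rrel H (m + 1)) (gt, x ∘ Fin.predAbove i)) ∧
        -- codegeneracies on (R): delete the coset at slot `i`
        (∀ m (i : Fin (m + 1)) (gt : G) (x : Fin (m + 2) → G ⧸ H),
          σR m i (Quotient.mk (rrel H (m + 1)) (gt, x)) =
            Quotient.mk (rrel H m) (gt, x ∘ Fin.succAbove i.castSucc)) ∧
        -- cyclic operator on (R): `τ[g̃, x₀,…,x_m] = [g̃, x₁,…,x_m, g̃x₀]`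
        (∀ m (gt : G) (x : Fin (m + 1) → G ⧸ H),
          τR m (Quotient.mk (rrel H m) (gt, x)) =
            Quotient.mk (rrel H m)
              (gt, fun i => if (i : ℕ) = m then gt • x 0 else x (i + 1))) ∧
        -- intertwining (note the cyclic re-indexing of the cofaces)
        (∀ m (i : Fin (m + 1)) (c : QL H m),
          Φ (m + 1) (δL m i.succ c) = δR m i (Φ m c)) ∧
        (∀ m (i : Fin (m + 1)) (c : QL H (m + 1)),
          Φ m (σL m i c) = σR m i (Φ (m + 1) c)) ∧
        (∀ m (c : QL H m), Φ m (τL m c) = τR m (Φ m c)) := by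
  classical
  refine ⟨Takeuchi.Phi H, Takeuchi.Psi H,
    fun m g => rfl,
    fun m gt x => Takeuchi.Psi_mk gt x,
    fun m => ⟨Takeuchi.psi_phi m, Takeuchi.phi_psi m⟩,
    Takeuchi.DL H, Takeuchi.SL H, Takeuchi.TL H,
    Takeuchi.DR H, Takeuchi.SR H, Takeuchi.TR H,
    fun m i g => Takeuchi.DL_mk i g,
    fun m i g => Takeuchi.SL_mk i g,
    fun m g => Takeuchi.TL_mk g,
    fun m i gt x => rfl,
    fun m i gt x => rfl,
    fun m gt x => rfl,
    fun m i c => by rw [Takeuchi.DL_succ]; exact Takeuchi.phi_psi (m+1) _,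
    fun m i c => Takeuchi.phi_psi m _,
    fun m c => Takeuchi.phi_psi m _⟩
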